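/- Let L be a frame and L_s a sublattice of L containing 0 that sup-generates L. Then (Spec(L), Δ_L(L_s)) is a locally small space: Δ_L(0) = ∅ belongs to Δ_L(L_s), the family Δ_L(L_s) is closed under binary intersections and binary unions, and ⋃ Δ_L(L_s) = Spec(L); moreover its topology of weakly open sets equals Δ_L(L), and (Spec(L), Δ_L(L)) is a sober topological space. -/

import Mathlib

open Set TopologicalSpace

universe u



/-! ### Frames: spectra -/

/-- The set of non-unit primes of a frame. -/
def SpecS (L : Type u) [Order.Frame L] : Set L :=
  {p | p ≠ ⊤ ∧ ∀ a b : L, p = a ⊓ b → p = a ∨ p = b}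

/-- `DeltaS a = { p ∈ Spec L : a ≰ p }`. -/
def DeltaS {L : Type u} [Order.Frame L] (a : L) : Set (SpecS L) :=
  {p | ¬ a ≤ (p : L)}

variable {L M N : Type u} [Order.Frame L] [Order.Frame M] [Order.Frame N]

lemma SpecS.inf_le {p : L} (hp : p ∈ SpecS L) {a b : L} (h : a ⊓ b ≤ p) :
    a ≤ p ∨ b ≤ p := by
  have h1 : p = (p ⊔ a) ⊓ (p ⊔ b) := by
    rw [← sup_inf_left, sup_eq_left.mpr h]
  rcases hp.2 _ _ h1 with h2 | h2
  · exact Or.inl (by rw [h2]; exact le_sup_right)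
  · exact Or.inr (by rw [h2]; exact le_sup_right)

lemma DeltaS_bot : DeltaS (⊥ : L) = ∅ := by
  ext p; simp [DeltaS]

lemma DeltaS_top : DeltaS (⊤ : L) = univ := by
  ext p; simpa [DeltaS, top_le_iff] using p.2.1

lemma DeltaS_inf (a b : L) : DeltaS (a ⊓ b) = DeltaS a ∩ DeltaS b := by
  ext p
  constructor
  · intro hp
    constructor <;> · intro hle; exact hp (le_trans (by simp) hle)
  · rintro ⟨h1, h2⟩ hle
    rcases SpecS.inf_le p.2 hle with h | h
    · exact h1 h
    · exact h2 h

lemma DeltaS_sup (a b : L) : DeltaS (a ⊔ b) = DeltaS a ∪ DeltaS b := by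
  ext p
  constructor
  · intro hp
    by_cases ha : a ≤ (p : L)
    · exact Or.inr fun hb => hp (sup_le ha hb)
    · exact Or.inl ha
  · rintro (h | h) hle
    · exact h (le_trans le_sup_left hle)
    · exact h (le_trans le_sup_right hle)

lemma DeltaS_sSup (S : Set L) : DeltaS (sSup S) = ⋃ a ∈ S, DeltaS a := by
  ext p
  simp only [DeltaS, mem_setOf_eq, mem_iUnion, sSup_le_iff, not_forall]

/-- The hull-kernel topology on the spectrum of a frame: the open sets are
exactly the sets of the form `DeltaS a`. -/
def specTop (L : Type u) [Order.Frame L] : TopologicalSpace (SpecS L) where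
  IsOpen U := U ∈ Set.range (DeltaS (L := L))
  isOpen_univ := ⟨⊤, DeltaS_top⟩
  isOpen_inter := by
    rintro _ _ ⟨a, rfl⟩ ⟨b, rfl⟩
    exact ⟨a ⊓ b, DeltaS_inf a b⟩
  isOpen_sUnion := by
    intro S hS
    refine ⟨sSup {a | DeltaS a ∈ S}, ?_⟩
    rw [DeltaS_sSup]
    apply Set.Subset.antisymm
    · intro p hp
      simp only [mem_iUnion] at hp ⊢
      obtain ⟨a, ha, hpa⟩ := hp
      exact ⟨_, ha, hpa⟩
    · intro p hp
      rcases hp with ⟨U, hU, hpU⟩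
      obtain ⟨a, rfl⟩ := hS U hU
      simp only [mem_iUnion]
      exact ⟨a, hU, hpU⟩

/-! ### Right Galois adjoints -/

/-- The right Galois adjoint of a map between complete lattices. -/
def rAdj [CompleteLattice M] [CompleteLattice L] (h : L → M) : M → L :=
  fun m => sSup {l | h l ≤ m}

lemma gc_rAdj (h : FrameHom L M) : GaloisConnection ⇑h (rAdj ⇑h) := by
  intro l m
  constructor
  · intro hl; exact le_sSup hl
  · intro hl
    calc h l ≤ h (rAdj (⇑h) m) := OrderHomClass.mono h hl
      _ ≤ m := by
          rw [rAdj, map_sSup]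
          apply sSup_le
          rintro _ ⟨l', hl', rfl⟩
          exact hl'

lemma rAdj_id : rAdj (id : L → L) = id := by
  funext m
  exact le_antisymm (sSup_le fun _ h => h) (le_sSup le_rfl)

lemma rAdj_mem_SpecS (h : FrameHom L M) {p : M} (hp : p ∈ SpecS M) :
    rAdj ⇑h p ∈ SpecS L := by
  have gc := gc_rAdj h
  constructor
  · intro htop
    apply hp.1
    rw [top_le_iff.symm]
    have : h ⊤ ≤ p := (gc ⊤ p).mpr (htop ▸ le_rfl)
    simpa using this
  · intro a b hab
    have hle : h a ⊓ h b ≤ p := by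
      rw [← map_inf]
      exact (gc _ p).mpr (le_of_eq hab.symm)
    have h1 : rAdj ⇑h p ≤ a := hab ▸ inf_le_left
    have h2 : rAdj ⇑h p ≤ b := hab ▸ inf_le_right
    rcases SpecS.inf_le hp hle with hc | hc
    · exact Or.inl (le_antisymm h1 ((gc a p).mp hc))
    · exact Or.inr (le_antisymm h2 ((gc b p).mp hc))

/-! ### Way-below, continuous and spatial frames -/

/-- `b` is way below `a`. -/
def WayBelow (b a : L) : Prop :=
  ∀ D : Set L, D.Nonempty → DirectedOn (· ≤ ·) D → a ≤ sSup D → ∃ d ∈ D, b ≤ d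

/-- A continuous frame. -/
def IsContinuousFrame (L : Type u) [Order.Frame L] : Prop :=
  ∀ a : L, a = sSup {b | WayBelow b a}

/-- A spatial frame: every element is a meet of primes. -/
def IsSpatialFrame (L : Type u) [Order.Frame L] : Prop :=
  ∀ a : L, ∃ T ⊆ SpecS L, a = sInf T

/-! ### Dominating and compatible homomorphisms -/

/-- `h` is dominating with respect to the designated sublattices. -/
def Dominating (sL : Set L) (sM : Set M) (h : L → M) : Prop :=
  ∀ m ∈ sM, ∃ l ∈ sL, h l ⊓ m = m

/-- `h` is compatible with respect to the designated sublattices. -/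
def Compatible (sL : Set L) (sM : Set M) (h : L → M) : Prop :=
  ∀ l ∈ sL, ∀ m ∈ sM, h l ⊓ m ∈ sM

/-- The weakly open sets generated by a family: unions of subfamilies. -/
def woF {X : Type u} (Lx : Set (Set X)) : Set (Set X) := {U | ∃ F ⊆ Lx, U = ⋃₀ F}

lemma spec_mem_closure_singleton (x q : SpecS L) :
    q ∈ @closure _ (specTop L) {x} ↔ (x : L) ≤ (q : L) := by
  letI := specTop L
  rw [mem_closure_iff]
  constructor
  · intro h
    by_contra hxq
    obtain ⟨p, hp, hpx⟩ := h (DeltaS (x : L)) ⟨_, rfl⟩ hxq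
    rw [Set.mem_singleton_iff] at hpx
    subst hpx
    exact hp le_rfl
  · intro h U hU hqU
    obtain ⟨a, rfl⟩ := hU
    exact ⟨x, fun hax => hqU (hax.trans h), rfl⟩

lemma spec_closure_singleton (x : SpecS L) :
    @closure _ (specTop L) {x} = {q : SpecS L | (x : L) ≤ (q : L)} :=
  Set.ext fun q => spec_mem_closure_singleton x q

/-- For a frame `L` with a sup-generating sublattice with zero `L_s`, the pair
`(Spec L, Δ_L(L_s))` is a locally small space whose weakly open sets are
exactly `Δ_L(L)`, and the hull-kernel topology on `Spec L` is sober. -/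
theorem spectrum_is_sober_LSS {L : Type u} [Order.Frame L] (s : Set L)
    (hbot : ⊥ ∈ s) (hinf : ∀ a ∈ s, ∀ b ∈ s, a ⊓ b ∈ s)
    (hsup : ∀ a ∈ s, ∀ b ∈ s, a ⊔ b ∈ s)
    (hgen : ∀ a : L, ∃ T ⊆ s, a = sSup T) :
    DeltaS (⊥ : L) = (∅ : Set (SpecS L)) ∧
    (∅ : Set (SpecS L)) ∈ DeltaS '' s ∧
    (∀ A ∈ DeltaS '' s, ∀ B ∈ DeltaS '' s, A ∩ B ∈ DeltaS '' s) ∧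
    (∀ A ∈ DeltaS '' s, ∀ B ∈ DeltaS '' s, A ∪ B ∈ DeltaS '' s) ∧
    ⋃₀ (DeltaS '' s) = (Set.univ : Set (SpecS L)) ∧
    woF (DeltaS '' s) = Set.range (DeltaS (L := L)) ∧
    @T0Space (SpecS L) (specTop L) ∧
    @QuasiSober (SpecS L) (specTop L) := by
  refine ⟨DeltaS_bot, ⟨⊥, hbot, DeltaS_bot⟩, ?_, ?_, ?_, ?_, ?_, ?_⟩
  · rintro _ ⟨a, ha, rfl⟩ _ ⟨b, hb, rfl⟩
    exact ⟨a ⊓ b, hinf a ha b hb, DeltaS_inf a b⟩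
  · rintro _ ⟨a, ha, rfl⟩ _ ⟨b, hb, rfl⟩
    exact ⟨a ⊔ b, hsup a ha b hb, DeltaS_sup a b⟩
  · apply Set.eq_univ_of_forall
    intro p
    obtain ⟨T, hT, hTop⟩ := hgen ⊤
    by_contra h
    have hle : (⊤ : L) ≤ (p : L) := by
      rw [hTop]
      apply sSup_le
      intro t ht
      by_contra htp
      exact h ⟨DeltaS t, ⟨t, hT ht, rfl⟩, htp⟩
    exact p.2.1 (top_le_iff.mp hle)
  · ext U
    constructor
    · rintro ⟨F, hF, rfl⟩
      refine ⟨sSup {l ∈ s | DeltaS l ∈ F}, ?_⟩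
      rw [DeltaS_sSup]
      ext p
      simp only [Set.mem_iUnion, Set.mem_sUnion, Set.mem_setOf_eq]
      constructor
      · rintro ⟨a, ⟨has, haF⟩, hp⟩
        exact ⟨_, haF, hp⟩
      · rintro ⟨V, hVF, hpV⟩
        obtain ⟨a, has, rfl⟩ := hF hVF
        exact ⟨a, ⟨has, hVF⟩, hpV⟩
    · rintro ⟨a, rfl⟩
      obtain ⟨T, hT, hEq⟩ := hgen a
      refine ⟨DeltaS '' T, Set.image_mono hT, ?_⟩
      rw [hEq, DeltaS_sSup, Set.sUnion_image]
  · letI := specTop L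
    refine (t0Space_iff_inseparable _).mpr fun x y hxy => ?_
    have h1 : @closure _ (specTop L) {x} = @closure _ (specTop L) {y} :=
      inseparable_iff_closure_eq.mp hxy
    have hx : (x : L) ≤ (y : L) := by
      have := (spec_mem_closure_singleton x y).mp
        (h1 ▸ subset_closure (Set.mem_singleton y))
      exact this
    have hy : (y : L) ≤ (x : L) := by
      have := (spec_mem_closure_singleton y x).mp
        (h1 ▸ subset_closure (Set.mem_singleton x))
      exact this
    exact Subtype.ext (le_antisymm hx hy)
  · letI := specTop L
    constructor
    intro S hS hS'
    obtain ⟨b, hb⟩ : Sᶜ ∈ Set.range (DeltaS (L := L)) := hS'.isOpen_compl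
    have hSb : ∀ q : SpecS L, q ∈ S ↔ b ≤ (q : L) := by
      intro q
      rw [← Set.notMem_compl_iff, ← hb]
      simp [DeltaS]
    set a : L := sInf ((↑) '' S) with ha
    have hSa : ∀ q : SpecS L, q ∈ S ↔ a ≤ (q : L) := by
      intro q
      constructor
      · intro hq
        exact sInf_le (Set.mem_image_of_mem _ hq)
      · intro hq
        rw [hSb]
        refine le_trans ?_ hq
        apply le_sInf
        rintro _ ⟨p, hp, rfl⟩
        exact (hSb p).mp hp
    have haSpec : a ∈ SpecS L := by
      obtain ⟨q, hq⟩ := hS.1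
      constructor
      · intro htop
        exact q.2.1 (top_le_iff.mp (htop ▸ (hSa q).mp hq))
      · intro c d hcd
        by_contra hne
        push_neg at hne
        have hnec : ∃ p ∈ S, ¬ c ≤ (p : L) := by
          by_contra hc
          push_neg at hc
          refine hne.1 (le_antisymm (hcd ▸ inf_le_left) ?_)
          apply le_sInf
          rintro _ ⟨p, hp, rfl⟩
          exact hc p hp
        have hned : ∃ p ∈ S, ¬ d ≤ (p : L) := by
          by_contra hd
          push_neg at hd
          refine hne.2 (le_antisymm (hcd ▸ inf_le_right) ?_)
          apply le_sInf
          rintro _ ⟨p, hp, rfl⟩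
          exact hd p hp
        obtain ⟨p1, hp1, hp1c⟩ := hnec
        obtain ⟨p2, hp2, hp2d⟩ := hned
        obtain ⟨p, hpS, hpc, hpd⟩ := hS.2 (DeltaS c) (DeltaS d) ⟨c, rfl⟩ ⟨d, rfl⟩
          ⟨p1, hp1, hp1c⟩ ⟨p2, hp2, hp2d⟩
        have : a ≤ (p : L) := (hSa p).mp hpS
        rcases SpecS.inf_le p.2 (hcd ▸ this) with h | h
        · exact hpc h
        · exact hpd h
    refine ⟨⟨a, haSpec⟩, ?_⟩
    rw [IsGenericPoint, spec_closure_singleton]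
    ext q
    exact (hSa q).symm
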